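/- Let γ_u and γ_e be independent nonnegative random variables with CDFs F_u, F_e and suppose F_u is continuous. Then E[max(log₂(1+γ_u) − log₂(1+γ_e), 0)] = (1/ln 2)·∫_0^∞ (1 − F_u(t))·F_e(t)/(1+t) dt. -/

import Mathlib

open MeasureTheory ProbabilityTheory Real Set
open scoped ENNReal

lemma secrecy_aux_one (a b : ℝ) (ha : 0 ≤ a) (hb : 0 ≤ b) :
    ∫⁻ t in Set.Ioi (0:ℝ), (Set.Ico b a).indicator (fun t => ENNReal.ofReal ((1+t)⁻¹)) t
      = ENNReal.ofReal (max (Real.log (1+a) - Real.log (1+b)) 0) := by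
  rcases le_or_gt a b with hab | hba
  · have hIco : Set.Ico b a = ∅ := Set.Ico_eq_empty (not_lt.mpr hab)
    have hmax : max (Real.log (1+a) - Real.log (1+b)) 0 = 0 := by
      have := Real.log_le_log (by linarith) (by linarith : 1 + a ≤ 1 + b)
      exact max_eq_right (by linarith)
    simp [hIco, hmax]
  · rw [lintegral_indicator measurableSet_Ico, Measure.restrict_restrict measurableSet_Ico]
    have hae : (Set.Ico b a ∩ Set.Ioi 0 : Set ℝ) =ᵐ[volume] Set.Icc b a := by
      rw [MeasureTheory.ae_eq_set]
      constructor
      · refine measure_mono_null (fun x hx => ?_) (measure_empty (μ := volume))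
        exact absurd ⟨hx.1.1.1, hx.1.1.2.le⟩ hx.2
      · refine measure_mono_null (t := ({a} ∪ {0} : Set ℝ)) (fun x hx => ?_) ?_
        · rcases hx with ⟨hx1, hx2⟩
          by_contra hne
          simp only [Set.mem_union, Set.mem_singleton_iff, not_or] at hne
          exact hx2 ⟨⟨hx1.1, lt_of_le_of_ne hx1.2 hne.1⟩,
            lt_of_le_of_ne (le_trans hb hx1.1) (Ne.symm hne.2)⟩
        · exact measure_union_null (measure_singleton a) (measure_singleton 0)
    rw [setLIntegral_congr hae]
    have hcont : ContinuousOn (fun t : ℝ => (1+t)⁻¹) (Set.Icc b a) := by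
      apply ContinuousOn.inv₀ (by fun_prop)
      intro x hx; have := hx.1; nlinarith
    have hint : IntegrableOn (fun t : ℝ => (1+t)⁻¹) (Set.Icc b a) :=
      hcont.integrableOn_Icc
    rw [← ofReal_integral_eq_lintegral_ofReal hint
      ((ae_restrict_iff' measurableSet_Icc).2 (ae_of_all _ fun x hx =>
        inv_nonneg.mpr (by linarith [hx.1])))]
    congr 1
    rw [MeasureTheory.integral_Icc_eq_integral_Ioc, ← intervalIntegral.integral_of_le hba.le]
    have hsub : (∫ t in b..a, (1+t)⁻¹) = ∫ x in (1+b)..(1+a), x⁻¹ :=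
      intervalIntegral.integral_comp_add_left (fun x => x⁻¹) 1
    rw [hsub, integral_inv (by
      intro h
      rcases Set.mem_uIcc.1 h with ⟨h1, _⟩ | ⟨h1, _⟩ <;> linarith)]
    rw [Real.log_div (by linarith) (by linarith)]
    exact (max_eq_left (by
      have := Real.log_le_log (by linarith) (by linarith : 1 + b ≤ 1 + a)
      linarith)).symm

lemma secrecy_aux_pt (a b : ℝ) (ha : 0 ≤ a) (hb : 0 ≤ b) :
    ENNReal.ofReal (max (Real.logb 2 (1+a) - Real.logb 2 (1+b)) 0)
      = ENNReal.ofReal (1 / Real.log 2) *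
        ∫⁻ t in Set.Ioi (0:ℝ), (Set.Ico b a).indicator (fun t => ENNReal.ofReal ((1+t)⁻¹)) t := by
  have h2 : (0:ℝ) < Real.log 2 := Real.log_pos one_lt_two
  rw [secrecy_aux_one a b ha hb, ← ENNReal.ofReal_mul (by positivity)]
  congr 1
  rw [Real.logb, Real.logb, div_sub_div_same]
  rw [show (0:ℝ) = 0 / Real.log 2 by simp, max_div_div_right h2.le]
  rw [one_div_mul_eq_div]
  norm_num

/-- The average secrecy rate representation (eq. (12)):
E[⌈log₂(1+γ_u) - log₂(1+γ_e)⌉⁺] = (1/ln 2) ∫₀^∞ (1-F_u(t)) F_e(t)/(1+t) dt,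
for independent nonnegative γ_u, γ_e with F_u continuous.  (Stated with lower
integrals so that both sides are meaningful without integrability assumptions.) -/
theorem average_secrecy_rate_repr {Ω : Type*} [MeasurableSpace Ω] (μ : Measure Ω)
    [IsProbabilityMeasure μ] (γu γe : Ω → ℝ)
    (hγu : Measurable γu) (hγe : Measurable γe)
    (hγu0 : ∀ ω, 0 ≤ γu ω) (hγe0 : ∀ ω, 0 ≤ γe ω)
    (hind : IndepFun γu γe μ)
    (Fu Fe : ℝ → ℝ)
    (hFu : ∀ t, Fu t = (μ {ω | γu ω ≤ t}).toReal)
    (hFe : ∀ t, Fe t = (μ {ω | γe ω ≤ t}).toReal)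
    (hFucont : Continuous Fu) :
    (∫⁻ ω, ENNReal.ofReal
        (max (Real.logb 2 (1 + γu ω) - Real.logb 2 (1 + γe ω)) 0) ∂μ) =
      ENNReal.ofReal (1 / Real.log 2) *
        ∫⁻ t in Set.Ioi (0:ℝ), ENNReal.ofReal ((1 - Fu t) * Fe t / (1 + t)) := by
  classical
  set S : Set (Ω × ℝ) := {p | γe p.1 ≤ p.2 ∧ p.2 < γu p.1} with hS
  have hSmeas : MeasurableSet S := by
    have h1 : MeasurableSet {p : Ω × ℝ | γe p.1 ≤ p.2} :=
      measurableSet_le (hγe.comp measurable_fst) measurable_snd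
    have h2 : MeasurableSet {p : Ω × ℝ | p.2 < γu p.1} :=
      measurableSet_lt measurable_snd (hγu.comp measurable_fst)
    exact (h1.inter h2 : _)
  set F : Ω × ℝ → ℝ≥0∞ := S.indicator (fun p => ENNReal.ofReal ((1 + p.2)⁻¹)) with hF
  have hFmeas : Measurable F :=
    (ENNReal.measurable_ofReal.comp ((measurable_const.add measurable_snd).inv)).indicator hSmeas
  have hkey : ∀ ω t, (Set.Ico (γe ω) (γu ω)).indicator
      (fun t => ENNReal.ofReal ((1+t)⁻¹)) t = F (ω, t) := by
    intro ω t
    simp only [hF, hS, Set.indicator_apply, Set.mem_Ico, Set.mem_setOf_eq]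
  -- pointwise rewrite
  have hpt : (∫⁻ ω, ENNReal.ofReal
        (max (Real.logb 2 (1 + γu ω) - Real.logb 2 (1 + γe ω)) 0) ∂μ)
      = ENNReal.ofReal (1 / Real.log 2) *
        ∫⁻ ω, (∫⁻ t in Set.Ioi (0:ℝ), F (ω, t)) ∂μ := by
    rw [← lintegral_const_mul' _ _ ENNReal.ofReal_ne_top]
    refine lintegral_congr fun ω => ?_
    rw [secrecy_aux_pt (γu ω) (γe ω) (hγu0 ω) (hγe0 ω)]
    exact congrArg _ (lintegral_congr fun t => hkey ω t)
  rw [hpt]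
  congr 1
  rw [lintegral_lintegral_swap (f := fun ω t => F (ω, t)) hFmeas.aemeasurable]
  refine setLIntegral_congr_fun measurableSet_Ioi (fun t ht => ?_)
  -- inner integral over ω
  have hEmeas : MeasurableSet {ω | γe ω ≤ t ∧ t < γu ω} :=
    (measurableSet_le hγe measurable_const).inter (measurableSet_lt measurable_const hγu)
  have hinner : (∫⁻ ω, F (ω, t) ∂μ)
      = ENNReal.ofReal ((1+t)⁻¹) * μ {ω | γe ω ≤ t ∧ t < γu ω} := by
    have : ∀ ω, F (ω, t) = ({ω | γe ω ≤ t ∧ t < γu ω}).indicator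
        (fun _ => ENNReal.ofReal ((1+t)⁻¹)) ω := by
      intro ω
      simp only [hF, hS, Set.indicator_apply, Set.mem_setOf_eq]
    rw [lintegral_congr this, lintegral_indicator hEmeas, setLIntegral_const]
  rw [hinner]
  -- independence
  have hset : {ω | γe ω ≤ t ∧ t < γu ω} = γu ⁻¹' (Set.Ioi t) ∩ γe ⁻¹' (Set.Iic t) := by
    ext ω; simp [Set.mem_setOf_eq, and_comm]
  have hindep : μ {ω | γe ω ≤ t ∧ t < γu ω}
      = μ (γu ⁻¹' (Set.Ioi t)) * μ (γe ⁻¹' (Set.Iic t)) := by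
    rw [hset]
    exact hind.measure_inter_preimage_eq_mul _ _ measurableSet_Ioi measurableSet_Iic
  have hFu1 : Fu t ≤ 1 := by
    rw [hFu]
    have h1 : μ {ω | γu ω ≤ t} ≤ 1 := prob_le_one
    calc (μ {ω | γu ω ≤ t}).toReal ≤ (1 : ℝ≥0∞).toReal :=
          ENNReal.toReal_mono ENNReal.one_ne_top h1
      _ = 1 := ENNReal.toReal_one
  have hFu0 : 0 ≤ Fu t := by rw [hFu]; exact ENNReal.toReal_nonneg
  have hFe0 : 0 ≤ Fe t := by rw [hFe]; exact ENNReal.toReal_nonneg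
  have hu : μ (γu ⁻¹' (Set.Ioi t)) = ENNReal.ofReal (1 - Fu t) := by
    have hcompl : γu ⁻¹' (Set.Ioi t) = {ω | γu ω ≤ t}ᶜ := by
      ext ω; simp [not_le]
    have hmeas : MeasurableSet {ω | γu ω ≤ t} := measurableSet_le hγu measurable_const
    rw [hcompl, measure_compl hmeas (measure_ne_top μ _), measure_univ,
      ENNReal.ofReal_sub _ hFu0, ENNReal.ofReal_one, hFu,
      ENNReal.ofReal_toReal (measure_ne_top μ _)]
  have he : μ (γe ⁻¹' (Set.Iic t)) = ENNReal.ofReal (Fe t) := by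
    rw [hFe, ENNReal.ofReal_toReal (measure_ne_top μ _)]
    rfl
  rw [hindep, hu, he]
  have ht0 : (0:ℝ) < 1 + t := by have := ht.out; linarith
  rw [div_eq_mul_inv, ENNReal.ofReal_mul (mul_nonneg (by linarith) hFe0), ENNReal.ofReal_mul (by linarith)]
  ring
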